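/- arXiv:1802.08672 — 2 statements merged into one kernel-verified Lean document; each statement's English description precedes it below -/
import Mathlib

section
/- Every fully shaded mesh pattern (a mesh pattern p of length n whose set of shaded boxes is all of {0,...,n}×{0,...,n}) occurs in no mesh pattern other than itself; consequently the mesh pattern poset has infinitely many maximal elements, namely exactly the fully shaded mesh patterns. -/
/-!
# The poset of mesh patterns

A mesh pattern is a permutation of `{1, ..., len}` together with a set of shaded
boxes in the `(len+1) × (len+1)` grid (boxes are indexed by their south-west corner,
so boxes have coordinates in `{0, ..., len} × {0, ..., len}`).

We normalise the permutation as a function `ℕ → ℕ` (using 1-based indexing) which is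
`0` outside of `[1, len]`; this makes equality of mesh patterns coincide with equality
of the underlying data.
-/

structure MeshPattern where
  len : ℕ
  perm : ℕ → ℕ
  sh : Finset (ℕ × ℕ)
  perm_mem : ∀ i, 1 ≤ i → i ≤ len → 1 ≤ perm i ∧ perm i ≤ len
  perm_zero : ∀ i, i = 0 ∨ len < i → perm i = 0
  perm_inj : ∀ i j, 1 ≤ i → i ≤ len → 1 ≤ j → j ≤ len → perm i = perm j → i = j
  perm_surj : ∀ v, 1 ≤ v → v ≤ len → ∃ i, 1 ≤ i ∧ i ≤ len ∧ perm i = v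
  sh_mem : ∀ q ∈ sh, q.1 ≤ len ∧ q.2 ≤ len

namespace MeshPattern

/-- The (1-based) position of the value `v` in the underlying permutation of `m`. -/
noncomputable def pos (m : MeshPattern) (v : ℕ) : ℕ := Function.invFun m.perm v

/-- The dimension of a mesh pattern: length of the permutation plus number of shaded boxes. -/
def dim (m : MeshPattern) : ℕ := m.len + m.sh.card

/-- Given (the position map of an occurrence) `η` of `m` in `p`, the extended column
boundary map: pattern column boundary `i` (for `0 ≤ i ≤ m.len + 1`) is sent to the
corresponding column boundary in `p`.  Boxes of `p` with first coordinate `a` satisfying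
`colExt m p η i ≤ a < colExt m p η (i+1)` are exactly the boxes lying horizontally
within the region corresponding to pattern boxes with first coordinate `i`. -/
def colExt (m p : MeshPattern) (η : ℕ → ℕ) (i : ℕ) : ℕ :=
  if i = 0 then 0 else if i ≤ m.len then η i else p.len + 1

/-- The analogous extended row (value) boundary map. -/
noncomputable def valExt (m p : MeshPattern) (η : ℕ → ℕ) (j : ℕ) : ℕ :=
  if j = 0 then 0 else if j ≤ m.len then p.perm (η (m.pos j)) else p.len + 1

/-- The box `(a, b)` of `p` lies in the region `R_η(i, j)` of the box `(i, j)` of `m`. -/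
def inRegion (m p : MeshPattern) (η : ℕ → ℕ) (i j a b : ℕ) : Prop :=
  colExt m p η i ≤ a ∧ a < colExt m p η (i + 1) ∧
    valExt m p η j ≤ b ∧ b < valExt m p η (j + 1)

/-- The point of `p` at position `y` lies in the open interior of the region `R_η(i, j)`. -/
def interiorPt (m p : MeshPattern) (η : ℕ → ℕ) (i j y : ℕ) : Prop :=
  colExt m p η i < y ∧ y < colExt m p η (i + 1) ∧
    valExt m p η j < p.perm y ∧ p.perm y < valExt m p η (j + 1)

/-- `η` is an occurrence of the mesh pattern `m` in the mesh pattern `p`: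
a (normalised) strictly increasing choice of positions realising the underlying
classical pattern, such that for every shaded box of `m` the corresponding region of `p`
contains no point of `p` in its interior and consists entirely of shaded boxes of `p`. -/
structure IsOcc (m p : MeshPattern) (η : ℕ → ℕ) : Prop where
  zero : ∀ i, i = 0 ∨ m.len < i → η i = 0
  mem : ∀ i, 1 ≤ i → i ≤ m.len → 1 ≤ η i ∧ η i ≤ p.len
  mono : ∀ i j, 1 ≤ i → i < j → j ≤ m.len → η i < η j
  pattern : ∀ i j, 1 ≤ i → i ≤ m.len → 1 ≤ j → j ≤ m.len →
    (m.perm i < m.perm j ↔ p.perm (η i) < p.perm (η j))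
  no_point : ∀ q ∈ m.sh, ∀ y, 1 ≤ y → y ≤ p.len → ¬ interiorPt m p η q.1 q.2 y
  shaded : ∀ q ∈ m.sh, ∀ a b, inRegion m p η q.1 q.2 a b → (a, b) ∈ p.sh

/-- The mesh pattern poset: `m ≤ p` iff there is an occurrence of `m` in `p`. -/
instance : LE MeshPattern := ⟨fun m p => ∃ η, IsOcc m p η⟩

instance : LT MeshPattern := ⟨fun m p => m ≤ p ∧ m ≠ p⟩

/-- `b` covers `a` in the mesh pattern poset. -/
def CovByM (a b : MeshPattern) : Prop := a < b ∧ ¬ ∃ z, a < z ∧ z < b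

open Classical in
/-- The Möbius function of a (locally finite) partial order `r`, computed with a fuel
parameter: `muFuel r n a b` is the Möbius function `μ(a, b)` provided `n` is at least the
length of the longest chain from `a` to `b` (with the convention `μ(a, b) = 0` if
`¬ r a b`). -/
noncomputable def muFuel {α : Type*} (r : α → α → Prop) : ℕ → α → α → ℤ
  | 0, a, b => if a = b then 1 else 0
  | n + 1, a, b =>
      if a = b then 1
      else if r a b then - ∑ᶠ c ∈ {c | r a c ∧ r c b ∧ c ≠ b}, muFuel r n a c
      else 0

/-- The Möbius function of the mesh pattern poset.  Since every chain from `m` to `p` has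
length at most `dim p`, the fuel `dim p + 1` is sufficient, so this is the genuine Möbius
function: `mu m m = 1`, `mu m p = -∑_{m ≤ c < p} mu m c` for `m < p`, and `mu m p = 0`
when `m ≰ p`. -/
noncomputable def mu (m p : MeshPattern) : ℤ := muFuel (· ≤ ·) (p.dim + 1) m p

/-- The classical permutation poset `𝓟`, realised as the subposet of unshaded mesh
patterns (for unshaded patterns, mesh occurrence is exactly classical pattern
containment).  Its Möbius function. -/
noncomputable def muP (σ π : {m : MeshPattern // m.sh = ∅}) : ℤ :=
  muFuel (· ≤ ·) (π.1.len + 1) σ π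

/-- The mesh pattern with underlying identity permutation of length `n`
and shaded boxes `s`. -/
def ofId (n : ℕ) (s : Finset (ℕ × ℕ)) (hs : ∀ q ∈ s, q.1 ≤ n ∧ q.2 ≤ n) : MeshPattern where
  len := n
  perm := fun i => if 1 ≤ i ∧ i ≤ n then i else 0
  sh := s
  perm_mem := by intro i h1 h2; rw [if_pos ⟨h1, h2⟩]; omega
  perm_zero := by intro i h; rw [if_neg]; omega
  perm_inj := by intro i j h1 h2 h3 h4 h; rw [if_pos ⟨h1, h2⟩, if_pos ⟨h3, h4⟩] at h; omega
  perm_surj := by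
    intro v h1 h2; exact ⟨v, h1, h2, by rw [if_pos ⟨h1, h2⟩]⟩
  sh_mem := hs

/-- The mesh pattern with underlying decreasing permutation of length `n`
and shaded boxes `s`. -/
def ofRev (n : ℕ) (s : Finset (ℕ × ℕ)) (hs : ∀ q ∈ s, q.1 ≤ n ∧ q.2 ≤ n) : MeshPattern where
  len := n
  perm := fun i => if 1 ≤ i ∧ i ≤ n then n + 1 - i else 0
  sh := s
  perm_mem := by intro i h1 h2; rw [if_pos ⟨h1, h2⟩]; omega
  perm_zero := by intro i h; rw [if_neg]; omega
  perm_inj := by intro i j h1 h2 h3 h4 h; rw [if_pos ⟨h1, h2⟩, if_pos ⟨h3, h4⟩] at h; omega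
  perm_surj := by
    intro v h1 h2
    exact ⟨n + 1 - v, by omega, by omega, by rw [if_pos ⟨by omega, by omega⟩]; omega⟩
  sh_mem := hs

/-- The unshaded singleton mesh pattern `1^∅`. -/
def one0 : MeshPattern := ofId 1 ∅ (by simp)

/-- The empty mesh pattern `ε^∅`. -/
def eps0 : MeshPattern := ofId 0 ∅ (by simp)

/-- The empty mesh pattern `ε^{(0,0)}` with its single box shaded. -/
def eps00 : MeshPattern := ofId 0 {(0, 0)} (by decide)

/-- The singleton mesh patterns `1^{(a,b)}` for `a b ∈ {0,1}`. -/
def one00 : MeshPattern := ofId 1 {(0, 0)} (by decide)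
def one10 : MeshPattern := ofId 1 {(1, 0)} (by decide)
def one01 : MeshPattern := ofId 1 {(0, 1)} (by decide)
def one11 : MeshPattern := ofId 1 {(1, 1)} (by decide)

/-- The mesh pattern `21^{(0,0),(1,0)}`. -/
def pat21 : MeshPattern := ofRev 2 {(0, 0), (1, 0)} (by decide)

/-- Replace the shading of `p` by a subset `A ⊆ sh p` (same underlying permutation):
this is the mesh pattern `(cl p)^A`. -/
def reshade (p : MeshPattern) (A : Finset (ℕ × ℕ)) (hA : A ⊆ p.sh) : MeshPattern :=
  { p with sh := A, sh_mem := fun q hq => p.sh_mem q (hA hq) }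

/-- The occurrence `η` of `s` in `p` uses the shaded box `(a, b) ∈ sh p`. -/
def UsesBox (s p : MeshPattern) (η : ℕ → ℕ) (a b : ℕ) : Prop :=
  (a, b) ∈ p.sh ∧ ∃ i j, (i, j) ∈ s.sh ∧ inRegion s p η i j a b

/-- The position map of the occurrence of `p − x` in `p` avoiding the point at
position `x`. -/
def etaDel (p : MeshPattern) (x : ℕ) : ℕ → ℕ := fun i =>
  if 1 ≤ i ∧ i ≤ p.len - 1 then (if i < x then i else i + 1) else 0

/-- The underlying permutation of the pattern obtained from `p` by deleting the point at
position `x`. -/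
def delPerm (p : MeshPattern) (x : ℕ) : ℕ → ℕ := fun i =>
  if 1 ≤ i ∧ i ≤ p.len - 1 then
    (if p.perm (etaDel p x i) < p.perm x then p.perm (etaDel p x i)
     else p.perm (etaDel p x i) - 1)
  else 0

/-- `q` is the mesh pattern `p − x` obtained from `p` by deleting the point at position
`x` (where `1 ≤ x ≤ len p`): the underlying permutation is obtained by deleting that
letter, and a box of `q` is shaded exactly when the corresponding region of `p` (under
the occurrence `etaDel p x`) is entirely shaded and contains no point of `p` in its
interior.  In particular `etaDel p x` is an occurrence of `q` in `p`. -/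
def IsDeletion (p : MeshPattern) (x : ℕ) (q : MeshPattern) : Prop :=
  1 ≤ x ∧ x ≤ p.len ∧ q.len + 1 = p.len ∧ q.perm = delPerm p x ∧
    ∀ i j : ℕ, ((i, j) ∈ q.sh ↔ i ≤ q.len ∧ j ≤ q.len ∧
      (∀ a b, inRegion q p (etaDel p x) i j a b → (a, b) ∈ p.sh) ∧
      ∀ y, 1 ≤ y → y ≤ p.len → ¬ interiorPt q p (etaDel p x) i j y)

/-- Deleting the point at position `x` of `p` (with `q = p − x`) merges shadings:
some shaded box of `q` corresponds to more than one shaded box of `p`. -/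
def MergesShadings (p : MeshPattern) (x : ℕ) (q : MeshPattern) : Prop :=
  ∃ i j, (i, j) ∈ q.sh ∧ ∃ a b a' b', (a, b) ≠ (a', b') ∧ (a, b) ∈ p.sh ∧
    (a', b') ∈ p.sh ∧ inRegion q p (etaDel p x) i j a b ∧
    inRegion q p (etaDel p x) i j a' b'

/-- `f 0 ⋖ f 1 ⋖ ⋯ ⋖ f k` is a maximal chain of length `k` from `a` to `b`. -/
def IsMaxChain (a b : MeshPattern) (k : ℕ) (f : ℕ → MeshPattern) : Prop :=
  f 0 = a ∧ f k = b ∧ ∀ i < k, CovByM (f i) (f (i + 1))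

/-- Underlying permutation of the direct sum `s ⊕ t`. -/
def dsumPerm (s t : MeshPattern) : ℕ → ℕ := fun i =>
  if i ≤ s.len then s.perm i
  else if i ≤ s.len + t.len then t.perm (i - s.len) + s.len
  else 0

/-- Shading of the direct sum `s ⊕ t`: the shadings of `s` and of `t` (translated), where
boxes on the shared boundary are extended to the new boundary (north/east for boxes of
`s`, south/west for boxes of `t`). -/
def dsumSh (s t : MeshPattern) : Finset (ℕ × ℕ) :=
  s.sh ∪ t.sh.image (fun q => (q.1 + s.len, q.2 + s.len)) ∪
    (s.sh.filter (fun q => q.2 = s.len)).biUnion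
      (fun q => (Finset.range (t.len + 1)).image (fun k => (q.1, s.len + k))) ∪
    (s.sh.filter (fun q => q.1 = s.len)).biUnion
      (fun q => (Finset.range (t.len + 1)).image (fun k => (s.len + k, q.2))) ∪
    (t.sh.filter (fun q => q.2 = 0)).biUnion
      (fun q => (Finset.range (s.len + 1)).image (fun k => (q.1 + s.len, k))) ∪
    (t.sh.filter (fun q => q.1 = 0)).biUnion
      (fun q => (Finset.range (s.len + 1)).image (fun k => (k, q.2 + s.len)))

/-- `r = s ⊕ t` is the direct sum of the mesh patterns `s` and `t` (defined when the top
right corner box of `s` and the bottom left corner box of `t` are not shaded). -/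
def IsDSum (s t r : MeshPattern) : Prop :=
  (s.len, s.len) ∉ s.sh ∧ (0, 0) ∉ t.sh ∧
    r.len = s.len + t.len ∧ r.perm = dsumPerm s t ∧ r.sh = dsumSh s t

/-- A mesh pattern is indecomposable if it cannot be written as a direct sum `a ⊕ b`
with neither `a` nor `b` equal to it. -/
def Indecomposable (m : MeshPattern) : Prop :=
  ¬ ∃ s t, s ≠ m ∧ t ≠ m ∧ IsDSum s t m

/-- `SumOfList L m`: `m` is the direct sum of the list `L` of mesh patterns
(the empty list summing to the empty pattern `ε^∅`). -/
def SumOfList : List MeshPattern → MeshPattern → Prop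
  | [], m => m.len = 0 ∧ m.sh = ∅
  | [a], m => a = m
  | a :: b :: rest, m => ∃ r, SumOfList (b :: rest) r ∧ IsDSum a r m

/-- Underlying permutation of the skew sum `s ⊖ t`. -/
def sksumPerm (s t : MeshPattern) : ℕ → ℕ := fun i =>
  if i = 0 then 0
  else if i ≤ s.len then s.perm i + t.len
  else if i ≤ s.len + t.len then t.perm (i - s.len)
  else 0

/-- Shading of the skew sum `s ⊖ t` (s placed to the north west of `t`), with boxes on
the shared boundary extended to the new boundary. -/
def sksumSh (s t : MeshPattern) : Finset (ℕ × ℕ) :=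
  s.sh.image (fun q => (q.1, q.2 + t.len)) ∪ t.sh.image (fun q => (q.1 + s.len, q.2)) ∪
    (s.sh.filter (fun q => q.1 = s.len)).biUnion
      (fun q => (Finset.range (t.len + 1)).image (fun k => (s.len + k, q.2 + t.len))) ∪
    (s.sh.filter (fun q => q.2 = 0)).biUnion
      (fun q => (Finset.range (t.len + 1)).image (fun k => (q.1, k))) ∪
    (t.sh.filter (fun q => q.2 = t.len)).biUnion
      (fun q => (Finset.range (s.len + 1)).image (fun k => (q.1 + s.len, t.len + k))) ∪
    (t.sh.filter (fun q => q.1 = 0)).biUnion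
      (fun q => (Finset.range (s.len + 1)).image (fun k => (k, q.2)))

/-- `r = s ⊖ t` is the skew sum of the mesh patterns `s` and `t` (defined when the bottom
right corner box of `s` and the top left corner box of `t` are not shaded). -/
def IsSkewSum (s t r : MeshPattern) : Prop :=
  (s.len, 0) ∉ s.sh ∧ (0, t.len) ∉ t.sh ∧
    r.len = s.len + t.len ∧ r.perm = sksumPerm s t ∧ r.sh = sksumSh s t

/-- A mesh pattern is skew-indecomposable if it cannot be written as a skew sum `a ⊖ b`
with neither `a` nor `b` equal to it. -/
def SkewIndecomposable (m : MeshPattern) : Prop :=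
  ¬ ∃ s t, s ≠ m ∧ t ≠ m ∧ IsSkewSum s t m

/-- Connectivity (zig-zag of comparabilities) inside a subset `I` of the mesh pattern
poset. -/
def ConnIn (I : Set MeshPattern) (a b : MeshPattern) : Prop :=
  Relation.ReflTransGen (fun u v => u ∈ I ∧ v ∈ I ∧ (u ≤ v ∨ v ≤ u)) a b

/-- The interval `[m, p]` is strongly disconnected: its open interior has at least two
connected components each containing more than one element. -/
def StronglyDisconnectedInterval (m p : MeshPattern) : Prop :=
  ∃ a b, (m < a ∧ a < p) ∧ (m < b ∧ b < p) ∧ ¬ ConnIn {c | m < c ∧ c < p} a b ∧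
    (∃ a', (m < a' ∧ a' < p) ∧ a' ≠ a ∧ ConnIn {c | m < c ∧ c < p} a a') ∧
    (∃ b', (m < b' ∧ b' < p) ∧ b' ≠ b ∧ ConnIn {c | m < c ∧ c < p} b b')

/-- The occurrence of `m` in `m ⊕ m` (or `m ⊖ m`) as the first `|m|` points. -/
def eta1 (m : MeshPattern) : ℕ → ℕ := fun i => if 1 ≤ i ∧ i ≤ m.len then i else 0

/-- The occurrence of `m` in `m ⊕ m` (or `m ⊖ m`) as the last `|m|` points. -/
def eta2 (m : MeshPattern) : ℕ → ℕ := fun i => if 1 ≤ i ∧ i ≤ m.len then i + m.len else 0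

/-- `i` (with `2 ≤ i ≤ len`) is the position of an adjacency tail: the letter at
position `i` differs by one from the letter at position `i - 1`. -/
def IsAdjTail (m : MeshPattern) (i : ℕ) : Prop :=
  2 ≤ i ∧ i ≤ m.len ∧ (m.perm i = m.perm (i - 1) + 1 ∨ m.perm (i - 1) = m.perm i + 1)

open Classical in
/-- `adj(cl m)`: the number of adjacency tails of the underlying permutation of `m`. -/
noncomputable def adjCount (m : MeshPattern) : ℕ :=
  ((Finset.range (m.len + 1)).filter (fun i => IsAdjTail m i)).card

/-- The total number of mesh patterns of length `n`. -/
def Tcount (n : ℕ) : ℕ := n.factorial * 2 ^ ((n + 1) ^ 2)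

end MeshPattern

/-- Binary words, partially ordered by (not necessarily contiguous) subword containment:
the poset `𝓦`. -/
structure Word where
  toList : List Bool

instance : LE Word := ⟨fun u w => u.toList.Sublist w.toList⟩

/-- The binary word associated to a mesh pattern `m` in the class `Γ`: it has length
`|m| - 1`, and for each letter `i` with `2 ≤ i ≤ |m|` the corresponding entry is
`false` (i.e. `0`) if the letter `i` appears before the letter `1` in `cl m`,
and `true` (i.e. `1`) otherwise. -/
noncomputable def MeshPattern.wordOf (m : MeshPattern) : List Bool :=
  (List.range (m.len - 1)).map (fun k => if m.pos (k + 2) < m.pos 1 then false else true)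

namespace MeshPattern

/-- A mesh pattern is fully shaded if every box of its grid is shaded. -/
def FullyShaded (p : MeshPattern) : Prop :=
  p.sh = Finset.range (p.len + 1) ×ˢ Finset.range (p.len + 1)

lemma ext' {p q : MeshPattern} (hlen : p.len = q.len) (hperm : p.perm = q.perm)
    (hsh : p.sh = q.sh) : p = q := by
  cases p; cases q; simp_all

lemma pos_spec (p : MeshPattern) {v : ℕ} (h1 : 1 ≤ v) (h2 : v ≤ p.len) :
    p.perm (p.pos v) = v ∧ 1 ≤ p.pos v ∧ p.pos v ≤ p.len := by
  obtain ⟨i, hi1, hi2, hi3⟩ := p.perm_surj v h1 h2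
  have he : p.perm (p.pos v) = v := Function.invFun_eq ⟨i, hi3⟩
  refine ⟨he, ?_, ?_⟩ <;>
  · by_contra h
    have := p.perm_zero (p.pos v) (by omega)
    omega

lemma perm_card (n : ℕ) (f : ℕ → ℕ)
    (hmem : ∀ i, 1 ≤ i → i ≤ n → 1 ≤ f i ∧ f i ≤ n)
    (hinj : ∀ i j, 1 ≤ i → i ≤ n → 1 ≤ j → j ≤ n → f i = f j → i = j)
    (hsurj : ∀ v, 1 ≤ v → v ≤ n → ∃ i, 1 ≤ i ∧ i ≤ n ∧ f i = v)
    {i : ℕ} (h1 : 1 ≤ i) (h2 : i ≤ n) :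
    ((Finset.Icc 1 n).filter (fun j => f j ≤ f i)).card = f i := by
  have h : ((Finset.Icc 1 n).filter (fun j => f j ≤ f i)).card
      = (Finset.Icc 1 (f i)).card := by
    apply Finset.card_bij (fun j _ => f j)
    · intro a ha
      simp only [Finset.mem_filter, Finset.mem_Icc] at ha ⊢
      exact ⟨(hmem a ha.1.1 ha.1.2).1, ha.2⟩
    · intro a ha b hb hab
      simp only [Finset.mem_filter, Finset.mem_Icc] at ha hb
      exact hinj a b ha.1.1 ha.1.2 hb.1.1 hb.1.2 hab
    · intro v hv
      simp only [Finset.mem_Icc] at hv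
      obtain ⟨j, hj1, hj2, hj3⟩ := hsurj v hv.1 (le_trans hv.2 (hmem i h1 h2).2)
      exact ⟨j, Finset.mem_filter.2 ⟨Finset.mem_Icc.2 ⟨hj1, hj2⟩, by omega⟩, hj3⟩
  rw [h, Nat.card_Icc]; omega

lemma exists_band (f : ℕ → ℕ) (n y : ℕ) (h0 : f 0 < y) (htop : y < f (n + 1))
    (hne : ∀ i, 1 ≤ i → i ≤ n → f i ≠ y) :
    ∃ i, i ≤ n ∧ f i < y ∧ y < f (i + 1) := by
  classical
  set F := (Finset.range (n + 1)).filter (fun i => f i ≤ y) with hFdef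
  have hF : (0 : ℕ) ∈ F :=
    Finset.mem_filter.2 ⟨Finset.mem_range.2 (by omega), le_of_lt h0⟩
  obtain ⟨i, hiF, hmax⟩ : ∃ i ∈ F, ∀ j ∈ F, j ≤ i :=
    ⟨F.max' ⟨0, hF⟩, F.max'_mem _, fun j hj => F.le_max' j hj⟩
  have hin : i ≤ n := by
    have := (Finset.mem_filter.1 hiF).1; simp only [Finset.mem_range] at this; omega
  have hfi : f i ≤ y := (Finset.mem_filter.1 hiF).2
  refine ⟨i, hin, ?_, ?_⟩
  · rcases Nat.eq_zero_or_pos i with h | h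
    · rw [h]; exact h0
    · exact lt_of_le_of_ne hfi (hne i h hin)
  · by_cases hi : i = n
    · rw [hi]; exact htop
    · by_contra hcon
      push_neg at hcon
      have h1 : i + 1 ∈ F := Finset.mem_filter.2 ⟨Finset.mem_range.2 (by omega), hcon⟩
      have := hmax _ h1
      omega

/-- The fully shaded version of `p`. -/
def fullOf (p : MeshPattern) : MeshPattern where
  len := p.len
  perm := p.perm
  sh := Finset.range (p.len + 1) ×ˢ Finset.range (p.len + 1)
  perm_mem := p.perm_mem
  perm_zero := p.perm_zero
  perm_inj := p.perm_inj
  perm_surj := p.perm_surj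
  sh_mem := fun q hq => by
    simp only [Finset.mem_product, Finset.mem_range] at hq; omega

lemma colExt_zero (m p : MeshPattern) (η : ℕ → ℕ) : colExt m p η 0 = 0 := rfl

lemma colExt_top (m p : MeshPattern) (η : ℕ → ℕ) {i : ℕ} (h : m.len < i) :
    colExt m p η i = p.len + 1 := by
  unfold colExt; rw [if_neg (by omega), if_neg (by omega)]

lemma valExt_zero (m p : MeshPattern) (η : ℕ → ℕ) : valExt m p η 0 = 0 := rfl

lemma valExt_top (m p : MeshPattern) (η : ℕ → ℕ) {j : ℕ} (h : m.len < j) :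
    valExt m p η j = p.len + 1 := by
  unfold valExt; rw [if_neg (by omega), if_neg (by omega)]

lemma colExt_eta1 (p : MeshPattern) (i : ℕ) :
    colExt p (fullOf p) (eta1 p) i = if i ≤ p.len then i else p.len + 1 := by
  simp only [colExt, eta1, fullOf]
  split_ifs <;> omega

lemma valExt_eta1 (p : MeshPattern) (j : ℕ) :
    valExt p (fullOf p) (eta1 p) j = if j ≤ p.len then j else p.len + 1 := by
  simp only [valExt, eta1, fullOf]
  by_cases h0 : j = 0
  · simp [h0]
  · by_cases hj : j ≤ p.len
    · obtain ⟨he, hp1, hp2⟩ := p.pos_spec (by omega : 1 ≤ j) hj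
      rw [if_neg h0, if_pos hj, if_pos ⟨hp1, hp2⟩, he, if_pos hj]
    · rw [if_neg h0, if_neg hj, if_neg hj]

lemma le_fullOf (p : MeshPattern) : p ≤ fullOf p := by
  refine ⟨eta1 p, ?_, ?_, ?_, ?_, ?_, ?_⟩
  · intro i h; simp only [eta1]; rw [if_neg]; omega
  · intro i h1 h2; simp only [eta1]; rw [if_pos ⟨h1, h2⟩]
    exact ⟨h1, h2⟩
  · intro i j h1 h2 h3; simp only [eta1]
    rw [if_pos ⟨h1, by omega⟩, if_pos ⟨by omega, h3⟩]; omega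
  · intro i j h1 h2 h3 h4; simp only [eta1]
    rw [if_pos ⟨h1, h2⟩, if_pos ⟨h3, h4⟩]
    exact Iff.rfl
  · rintro ⟨i, j⟩ hq y hy1 hy2 ⟨hc1, hc2, _, _⟩
    have hij : i ≤ p.len := (p.sh_mem _ hq).1
    rw [colExt_eta1] at hc1 hc2
    rw [if_pos hij] at hc1
    by_cases h : i + 1 ≤ p.len
    · rw [if_pos h] at hc2; omega
    · rw [if_neg h] at hc2
      simp only [fullOf] at hy2
      omega
  · rintro ⟨i, j⟩ hq a b ⟨hc1, hc2, hv1, hv2⟩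
    rw [colExt_eta1] at hc2
    rw [valExt_eta1] at hv2
    simp only [fullOf, Finset.mem_product, Finset.mem_range]
    constructor
    · by_cases h : i + 1 ≤ p.len
      · rw [if_pos h] at hc2; omega
      · rw [if_neg h] at hc2; omega
    · by_cases h : j + 1 ≤ p.len
      · rw [if_pos h] at hv2; omega
      · rw [if_neg h] at hv2; omega

lemma eq_of_fullyShaded_le {p q : MeshPattern} (hfs : FullyShaded p) (h : p ≤ q) :
    q = p := by
  classical
  obtain ⟨η, occ⟩ := h
  set n := p.len with hn
  have hfull : ∀ i j, i ≤ n → j ≤ n → (i, j) ∈ p.sh := by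
    intro i j hi hj
    rw [hfs]
    simp only [Finset.mem_product, Finset.mem_range]
    omega
  -- η is at least the identity
  have hge : ∀ i, 1 ≤ i → i ≤ n → i ≤ η i := by
    intro i
    induction i with
    | zero => omega
    | succ k ih =>
      intro _ h2
      by_cases hk : 1 ≤ k
      · have h3 := ih hk (by omega)
        have h4 := occ.mono k (k + 1) hk (by omega) h2
        omega
      · have := (occ.mem (k + 1) (by omega) h2).1
        omega
  have hlen1 : n ≤ q.len := by
    by_cases h0 : n = 0
    · omega
    · have h1 := hge n (by omega) le_rfl
      have h2 := (occ.mem n (by omega) le_rfl).2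
      omega
  have hlen2 : q.len ≤ n := by
    by_contra hlt
    push_neg at hlt
    set S := (Finset.Icc 1 n).image η with hS
    have hcard : S.card ≤ n := le_trans Finset.card_image_le (by simp [Nat.card_Icc])
    have hnsub : ¬ Finset.Icc 1 q.len ⊆ S := by
      intro hsub
      have := Finset.card_le_card hsub
      simp only [Nat.card_Icc] at this
      omega
    obtain ⟨y, hy, hyS⟩ := Finset.not_subset.1 hnsub
    rw [Finset.mem_Icc] at hy
    have hyim : ∀ i, 1 ≤ i → i ≤ n → η i ≠ y := by
      intro i h1 h2 he
      exact hyS (Finset.mem_image.2 ⟨i, Finset.mem_Icc.2 ⟨h1, h2⟩, he⟩)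
    obtain ⟨i, hin, hci1, hci2⟩ := exists_band (colExt p q η) n y
      (by rw [colExt_zero]; omega)
      (by rw [colExt_top p q η (by omega)]; omega)
      (by intro i h1 h2
          unfold colExt
          rw [if_neg (by omega), if_pos h2]
          exact hyim i h1 h2)
    have hv := q.perm_mem y hy.1 hy.2
    obtain ⟨j, hjn, hvj1, hvj2⟩ := exists_band (valExt p q η) n (q.perm y)
      (by rw [valExt_zero]; omega)
      (by rw [valExt_top p q η (by omega)]; omega)
      (by intro j h1 h2
          unfold valExt
          rw [if_neg (by omega), if_pos h2]
          intro he
          obtain ⟨hpe, hp1, hp2⟩ := p.pos_spec h1 h2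
          have hm := occ.mem (p.pos j) hp1 hp2
          have := q.perm_inj _ _ hm.1 hm.2 hy.1 hy.2 he
          exact hyim (p.pos j) hp1 hp2 this)
    exact occ.no_point (i, j) (hfull i j hin hjn) y hy.1 hy.2 ⟨hci1, hci2, hvj1, hvj2⟩
  have hlen : q.len = n := le_antisymm hlen2 hlen1
  -- η is at most the identity, hence the identity
  have hle : ∀ k i, 1 ≤ i → i ≤ n → n ≤ i + k → η i ≤ i := by
    intro k
    induction k with
    | zero =>
      intro i h1 h2 h3
      have hi : i = n := by omega
      have := (occ.mem i h1 h2).2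
      omega
    | succ m ih =>
      intro i h1 h2 h3
      by_cases hi : i = n
      · have := (occ.mem i h1 h2).2; omega
      · have h4 := ih (i + 1) (by omega) (by omega) (by omega)
        have h5 := occ.mono i (i + 1) h1 (by omega) (by omega)
        omega
  have hid : ∀ i, 1 ≤ i → i ≤ n → η i = i := by
    intro i h1 h2
    have := hge i h1 h2
    have := hle n i h1 h2 (by omega)
    omega
  -- the underlying permutations agree
  have hiff : ∀ i j, 1 ≤ i → i ≤ n → 1 ≤ j → j ≤ n →
      (p.perm i < p.perm j ↔ q.perm i < q.perm j) := by
    intro i j h1 h2 h3 h4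
    have := occ.pattern i j h1 h2 h3 h4
    rwa [hid i h1 h2, hid j h3 h4] at this
  have hqmem : ∀ i, 1 ≤ i → i ≤ n → 1 ≤ q.perm i ∧ q.perm i ≤ n := by
    intro i h1 h2; have := q.perm_mem i h1 (by omega); omega
  have hqinj : ∀ i j, 1 ≤ i → i ≤ n → 1 ≤ j → j ≤ n → q.perm i = q.perm j → i = j :=
    fun i j h1 h2 h3 h4 => q.perm_inj i j h1 (by omega) h3 (by omega)
  have hqsurj : ∀ v, 1 ≤ v → v ≤ n → ∃ i, 1 ≤ i ∧ i ≤ n ∧ q.perm i = v := by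
    intro v h1 h2
    obtain ⟨i, hi1, hi2, hi3⟩ := q.perm_surj v h1 (by omega)
    exact ⟨i, hi1, by omega, hi3⟩
  have hperm_in : ∀ i, 1 ≤ i → i ≤ n → q.perm i = p.perm i := by
    intro i h1 h2
    have e1 := perm_card n q.perm hqmem hqinj hqsurj h1 h2
    have e2 := perm_card n p.perm p.perm_mem p.perm_inj p.perm_surj h1 h2
    have hf : (Finset.Icc 1 n).filter (fun j => q.perm j ≤ q.perm i) =
        (Finset.Icc 1 n).filter (fun j => p.perm j ≤ p.perm i) := by
      apply Finset.filter_congr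
      intro j hj
      rw [Finset.mem_Icc] at hj
      have a1 := hiff i j h1 h2 hj.1 hj.2
      have a2 := hiff j i hj.1 hj.2 h1 h2
      constructor <;> intro <;> omega
    rw [← e1, hf, e2]
  have hperm : q.perm = p.perm := by
    funext i
    by_cases h : 1 ≤ i ∧ i ≤ n
    · exact hperm_in i h.1 h.2
    · rw [q.perm_zero i (by omega), p.perm_zero i (by omega)]
  -- compute boundaries
  have hcol : ∀ i, colExt p q η i = if i ≤ n then i else n + 1 := by
    intro i
    simp only [colExt, hlen]
    by_cases h0 : i = 0
    · simp [h0]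
    · by_cases h : i ≤ n
      · rw [if_neg h0, if_pos h, if_pos h, hid i (by omega) h]
      · rw [if_neg h0, if_neg h, if_neg h]
  have hval : ∀ j, valExt p q η j = if j ≤ n then j else n + 1 := by
    intro j
    simp only [valExt, hlen]
    by_cases h0 : j = 0
    · simp [h0]
    · by_cases h : j ≤ n
      · obtain ⟨hpe, hp1, hp2⟩ := p.pos_spec (by omega : 1 ≤ j) h
        rw [if_neg h0, if_pos h, if_pos h, hid _ hp1 hp2, hperm, hpe]
      · rw [if_neg h0, if_neg h, if_neg h]
  have hsh : q.sh = p.sh := by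
    ext ⟨a, b⟩
    constructor
    · intro hab
      have h1 : a ≤ q.len := (q.sh_mem _ hab).1
      have h2 : b ≤ q.len := (q.sh_mem _ hab).2
      exact hfull a b (by omega) (by omega)
    · intro hab
      have ha : a ≤ n := (p.sh_mem _ hab).1
      have hb : b ≤ n := (p.sh_mem _ hab).2
      apply occ.shaded (a, b) hab a b
      refine ⟨?_, ?_, ?_, ?_⟩
      · rw [hcol]; split_ifs <;> omega
      · rw [hcol]; split_ifs <;> omega
      · rw [hval]; split_ifs <;> omega
      · rw [hval]; split_ifs <;> omega
  exact ext' (by omega) hperm hsh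

/-- A fully shaded mesh pattern occurs in no mesh pattern other than itself; consequently
the maximal elements of the mesh pattern poset are exactly the fully shaded mesh
patterns, and there are infinitely many of them. -/
theorem fullyShaded_occurs_only_in_self_and_maximal :
    (∀ p : MeshPattern, FullyShaded p → ∀ q, p ≤ q → q = p) ∧
    (∀ p : MeshPattern, (∀ q, p ≤ q → q = p) ↔ FullyShaded p) ∧
    {p : MeshPattern | ∀ q, p ≤ q → q = p}.Infinite := by
  have main : ∀ p : MeshPattern, FullyShaded p → ∀ q, p ≤ q → q = p :=
    fun p hfs q hq => eq_of_fullyShaded_le hfs hq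
  refine ⟨main, fun p => ⟨fun hmax => ?_, fun hfs q hq => eq_of_fullyShaded_le hfs hq⟩, ?_⟩
  · have h := hmax (fullOf p) (le_fullOf p)
    exact (congrArg MeshPattern.sh h).symm
  · apply Set.infinite_of_injective_forall_mem
      (f := fun n : ℕ => fullOf (ofId n ∅ (by simp)))
    · intro a b h
      simpa [fullOf, ofId] using congrArg MeshPattern.len h
    · intro n
      exact fun q hq => eq_of_fullyShaded_le rfl hq

end MeshPattern
end

section
/- Let m < p be mesh patterns with p covering m in the mesh pattern poset. Then the cover m ⋖ p is impure (i.e. dim(p) − dim(m) > 1, where dim(q) = |cl(q)| + |sh(q)|) if and only if every occurrence of m in p uses all the shaded boxes of p and is obtained by deleting a point of p whose deletion merges shadings. -/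
namespace MeshPattern

section Aux

lemma pos_spec_s11 (m : MeshPattern) {v : ℕ} (h1 : 1 ≤ v) (h2 : v ≤ m.len) :
    m.perm (m.pos v) = v ∧ 1 ≤ m.pos v ∧ m.pos v ≤ m.len := by
  obtain ⟨i, hi1, hi2, hi3⟩ := m.perm_surj v h1 h2
  have heq : m.perm (m.pos v) = v := Function.invFun_eq ⟨i, hi3⟩
  refine ⟨heq, ?_, ?_⟩ <;> by_contra h <;>
    · have h0 := m.perm_zero (m.pos v) (by omega)
      omega

lemma perm_le_len (m : MeshPattern) (y : ℕ) : m.perm y ≤ m.len := by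
  by_cases h : 1 ≤ y ∧ y ≤ m.len
  · exact (m.perm_mem y h.1 h.2).2
  · rw [m.perm_zero y (by omega)]; omega

lemma chain_lb {f : ℕ → ℕ} {n : ℕ}
    (hmono : ∀ j, 1 ≤ j → j + 1 ≤ n → f j < f (j + 1))
    (h1 : ∀ j, 1 ≤ j → j ≤ n → 1 ≤ f j) :
    ∀ j, 1 ≤ j → j ≤ n → j ≤ f j := by
  intro j
  induction j with
  | zero => omega
  | succ j ih =>
    intro _ h2
    rcases Nat.eq_zero_or_pos j with h | h
    · subst h; exact h1 1 le_rfl h2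
    · have := ih (by omega) (by omega)
      have := hmono j (by omega) (by omega)
      omega

lemma chain_ub {f : ℕ → ℕ} {n N : ℕ}
    (hmono : ∀ j, 1 ≤ j → j + 1 ≤ n → f j < f (j + 1))
    (hmem : ∀ j, 1 ≤ j → j ≤ n → f j ≤ N) :
    ∀ j, 1 ≤ j → j ≤ n → f j + (n - j) ≤ N := by
  have aux : ∀ k j, 1 ≤ j → j + k ≤ n → f j + k ≤ N := by
    intro k
    induction k with
    | zero => intro j h1 h2; simpa using hmem j h1 (by omega)
    | succ k ih =>
      intro j h1 h2
      have h3 := hmono j h1 (by omega)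
      have h4 := ih (j + 1) (by omega) (by omega)
      omega
  intro j h1 h2
  have := aux (n - j) j h1 (by omega)
  omega

lemma thresh {f : ℕ → ℕ} {n x : ℕ} (hx1 : 1 ≤ x) (hx2 : x ≤ n + 1)
    (hlb : ∀ i, 1 ≤ i → i ≤ n → i ≤ f i) (hub : ∀ i, 1 ≤ i → i ≤ n → f i ≤ i + 1)
    (hmono : ∀ i, 1 ≤ i → i + 1 ≤ n → f i < f (i + 1))
    (hne : ∀ i, 1 ≤ i → i ≤ n → f i ≠ x) :
    ∀ i, 1 ≤ i → i ≤ n → f i = if i < x then i else i + 1 := by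
  have prop : ∀ i, 1 ≤ i → i ≤ n → f i = i + 1 → ∀ k, i ≤ k → k ≤ n → f k = k + 1 := by
    intro i hi1 hi2 hfi k
    induction k with
    | zero => omega
    | succ k ih =>
      intro hik hkn
      rcases Nat.lt_or_ge i (k + 1) with h | h
      · have hk : f k = k + 1 := ih (by omega) (by omega)
        have h5 := hmono k (by omega) (by omega)
        have h6 := hub (k + 1) (by omega) hkn
        omega
      · have hik2 : i = k + 1 := by omega
        rw [← hik2]; omega
  intro i hi1 hin
  have hlbi := hlb i hi1 hin
  have hubi := hub i hi1 hin
  by_cases hix : i < x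
  · rw [if_pos hix]
    by_contra h
    have hfi : f i = i + 1 := by omega
    have h7 := prop i hi1 hin hfi (x - 1) (by omega) (by omega)
    have := hne (x - 1) (by omega) (by omega)
    omega
  · rw [if_neg hix]
    have hxn : x ≤ n := by omega
    have hfx : f x = x + 1 := by
      have := hlb x hx1 hxn
      have := hub x hx1 hxn
      have := hne x hx1 hxn
      omega
    exact prop x hx1 hxn hfx i (by omega) hin

lemma IsOcc.eta_lb {m p : MeshPattern} {η : ℕ → ℕ} (ho : IsOcc m p η) :
    ∀ i, 1 ≤ i → i ≤ m.len → i ≤ η i :=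
  chain_lb (fun j h1 h2 => ho.mono j (j + 1) h1 (by omega) h2)
    (fun j h1 h2 => (ho.mem j h1 h2).1)

lemma IsOcc.eta_ub {m p : MeshPattern} {η : ℕ → ℕ} (ho : IsOcc m p η) :
    ∀ i, 1 ≤ i → i ≤ m.len → η i + (m.len - i) ≤ p.len :=
  chain_ub (fun j h1 h2 => ho.mono j (j + 1) h1 (by omega) h2)
    (fun j h1 h2 => (ho.mem j h1 h2).2)

lemma IsOcc.len_le {m p : MeshPattern} {η : ℕ → ℕ} (ho : IsOcc m p η) :
    m.len ≤ p.len := by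
  rcases Nat.eq_zero_or_pos m.len with h | h
  · omega
  · have := ho.eta_lb m.len (by omega) le_rfl
    have := (ho.mem m.len (by omega) le_rfl).2
    omega

lemma IsOcc.valExt_mono {m p : MeshPattern} {η : ℕ → ℕ} (ho : IsOcc m p η) :
    ∀ j, 1 ≤ j → j + 1 ≤ m.len → valExt m p η j < valExt m p η (j + 1) := by
  intro j h1 h2
  obtain ⟨e1, e2, e3⟩ := pos_spec_s11 m (show 1 ≤ j by omega) (show j ≤ m.len by omega)
  obtain ⟨f1, f2, f3⟩ := pos_spec_s11 m (show 1 ≤ j + 1 by omega) h2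
  have key : p.perm (η (m.pos j)) < p.perm (η (m.pos (j + 1))) := by
    rw [← (ho.pattern (m.pos j) (m.pos (j + 1)) e2 e3 f2 f3)]
    omega
  simp only [valExt]
  rw [if_neg (by omega), if_pos (by omega), if_neg (by omega), if_pos h2]
  exact key

lemma IsOcc.valExt_mem {m p : MeshPattern} {η : ℕ → ℕ} (ho : IsOcc m p η) :
    ∀ j, 1 ≤ j → j ≤ m.len → 1 ≤ valExt m p η j ∧ valExt m p η j ≤ p.len := by
  intro j h1 h2
  obtain ⟨e1, e2, e3⟩ := pos_spec_s11 m h1 h2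
  have hm := ho.mem (m.pos j) e2 e3
  have := p.perm_mem (η (m.pos j)) hm.1 hm.2
  simp only [valExt]
  rw [if_neg (by omega), if_pos h2]
  exact this

end Aux
section Del

variable (p : MeshPattern) (x : ℕ)

lemma etaDel_mem (hx1 : 1 ≤ x) (hx2 : x ≤ p.len) {i : ℕ} (h1 : 1 ≤ i) (h2 : i ≤ p.len - 1) :
    etaDel p x i = (if i < x then i else i + 1) ∧ 1 ≤ etaDel p x i ∧
      etaDel p x i ≤ p.len ∧ etaDel p x i ≠ x := by
  simp only [etaDel]
  rw [if_pos (⟨h1, h2⟩ : 1 ≤ i ∧ i ≤ p.len - 1)]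
  split_ifs <;> omega

lemma etaDel_zero {i : ℕ} (h : ¬ (1 ≤ i ∧ i ≤ p.len - 1)) : etaDel p x i = 0 := by
  simp only [etaDel]; rw [if_neg h]

lemma delPerm_spec (hx1 : 1 ≤ x) (hx2 : x ≤ p.len) {i : ℕ} (h1 : 1 ≤ i) (h2 : i ≤ p.len - 1) :
    1 ≤ delPerm p x i ∧ delPerm p x i ≤ p.len - 1 ∧
      p.perm (etaDel p x i) =
        (if delPerm p x i < p.perm x then delPerm p x i else delPerm p x i + 1) := by
  obtain ⟨hd0, hd1, hd2, hd3⟩ := etaDel_mem p x hx1 hx2 h1 h2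
  have hP := p.perm_mem (etaDel p x i) hd1 hd2
  have hX := p.perm_mem x hx1 hx2
  have hPX : p.perm (etaDel p x i) ≠ p.perm x := fun h =>
    hd3 (p.perm_inj _ _ hd1 hd2 hx1 hx2 h)
  simp only [delPerm]
  simp only [if_pos (⟨h1, h2⟩ : 1 ≤ i ∧ i ≤ p.len - 1)]
  split_ifs <;> omega

lemma delPerm_zero {i : ℕ} (h : i = 0 ∨ p.len - 1 < i) : delPerm p x i = 0 := by
  simp only [delPerm]; rw [if_neg (by omega)]

noncomputable def delBase (hx1 : 1 ≤ x) (hx2 : x ≤ p.len) : MeshPattern where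
  len := p.len - 1
  perm := delPerm p x
  sh := ∅
  perm_mem := fun i h1 h2 =>
    ⟨(delPerm_spec p x hx1 hx2 h1 h2).1, (delPerm_spec p x hx1 hx2 h1 h2).2.1⟩
  perm_zero := fun i h => delPerm_zero p x h
  perm_inj := by
    intro i j h1 h2 h3 h4 h
    obtain ⟨a1, a2, a3⟩ := delPerm_spec p x hx1 hx2 h1 h2
    obtain ⟨b1, b2, b3⟩ := delPerm_spec p x hx1 hx2 h3 h4
    have heq : p.perm (etaDel p x i) = p.perm (etaDel p x j) := by
      rw [a3, b3, h]
    obtain ⟨c0, c1, c2, c3⟩ := etaDel_mem p x hx1 hx2 h1 h2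
    obtain ⟨d0, d1, d2, d3⟩ := etaDel_mem p x hx1 hx2 h3 h4
    have := p.perm_inj _ _ c1 c2 d1 d2 heq
    rw [c0, d0] at this
    split_ifs at this <;> omega
  perm_surj := by
    intro v h1 h2
    have hX := p.perm_mem x hx1 hx2
    set w := if v < p.perm x then v else v + 1 with hw
    have hw1 : 1 ≤ w := by rw [hw]; split_ifs <;> omega
    have hw2 : w ≤ p.len := by rw [hw]; split_ifs <;> omega
    have hwX : w ≠ p.perm x := by rw [hw]; split_ifs <;> omega
    obtain ⟨y, hy1, hy2, hy3⟩ := p.perm_surj w hw1 hw2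
    have hyx : y ≠ x := fun h => hwX (h ▸ hy3).symm
    set i0 := if y < x then y else y - 1 with hi0
    have h1' : 1 ≤ i0 := by rw [hi0]; split_ifs <;> omega
    have h2' : i0 ≤ p.len - 1 := by rw [hi0]; split_ifs <;> omega
    refine ⟨i0, h1', h2', ?_⟩
    obtain ⟨a0, a1, a2, a3⟩ := etaDel_mem p x hx1 hx2 h1' h2'
    have hey : etaDel p x i0 = y := by
      rw [a0, hi0]; split_ifs <;> omega
    obtain ⟨b1, b2, b3⟩ := delPerm_spec p x hx1 hx2 h1' h2'
    rw [hey, hy3, hw] at b3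
    split_ifs at b3 <;> omega
  sh_mem := by simp

noncomputable def delPattern (hx1 : 1 ≤ x) (hx2 : x ≤ p.len) : MeshPattern where
  len := p.len - 1
  perm := delPerm p x
  sh := @Finset.filter _ (fun ij =>
      (∀ a b, inRegion (delBase p x hx1 hx2) p (etaDel p x) ij.1 ij.2 a b → (a, b) ∈ p.sh) ∧
      ∀ y, 1 ≤ y → y ≤ p.len → ¬ interiorPt (delBase p x hx1 hx2) p (etaDel p x) ij.1 ij.2 y)
      (fun ij => Classical.propDecidable _)
      (Finset.range p.len ×ˢ Finset.range p.len)
  perm_mem := fun i h1 h2 =>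
    ⟨(delPerm_spec p x hx1 hx2 h1 h2).1, (delPerm_spec p x hx1 hx2 h1 h2).2.1⟩
  perm_zero := fun i h => delPerm_zero p x h
  perm_inj := (delBase p x hx1 hx2).perm_inj
  perm_surj := (delBase p x hx1 hx2).perm_surj
  sh_mem := by
    intro q hq
    simp only [Finset.mem_filter, Finset.mem_product, Finset.mem_range] at hq
    exact ⟨by omega, by omega⟩

lemma delPattern_len (hx1 : 1 ≤ x) (hx2 : x ≤ p.len) :
    (delPattern p x hx1 hx2).len = p.len - 1 := rfl

lemma delPattern_perm (hx1 : 1 ≤ x) (hx2 : x ≤ p.len) :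
    (delPattern p x hx1 hx2).perm = delPerm p x := rfl

lemma delPattern_mem_sh (hx1 : 1 ≤ x) (hx2 : x ≤ p.len) (i j : ℕ) :
    (i, j) ∈ (delPattern p x hx1 hx2).sh ↔ i < p.len ∧ j < p.len ∧
      (∀ a b, inRegion (delPattern p x hx1 hx2) p (etaDel p x) i j a b → (a, b) ∈ p.sh) ∧
      (∀ y, 1 ≤ y → y ≤ p.len →
        ¬ interiorPt (delPattern p x hx1 hx2) p (etaDel p x) i j y) := by
  have hreg : ∀ a b, inRegion (delPattern p x hx1 hx2) p (etaDel p x) i j a b ↔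
      inRegion (delBase p x hx1 hx2) p (etaDel p x) i j a b := fun a b => Iff.rfl
  have hint : ∀ y, interiorPt (delPattern p x hx1 hx2) p (etaDel p x) i j y ↔
      interiorPt (delBase p x hx1 hx2) p (etaDel p x) i j y := fun y => Iff.rfl
  show (i, j) ∈ @Finset.filter _ (fun ij =>
      (∀ a b, inRegion (delBase p x hx1 hx2) p (etaDel p x) ij.1 ij.2 a b → (a, b) ∈ p.sh) ∧
      ∀ y, 1 ≤ y → y ≤ p.len → ¬ interiorPt (delBase p x hx1 hx2) p (etaDel p x) ij.1 ij.2 y)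
      (fun ij => Classical.propDecidable _)
      (Finset.range p.len ×ˢ Finset.range p.len) ↔ _
  simp only [Finset.mem_filter, Finset.mem_product, Finset.mem_range]
  constructor
  · rintro ⟨⟨h1, h2⟩, h3, h4⟩
    exact ⟨h1, h2, fun a b h => h3 a b ((hreg a b).mp h),
      fun y hy1 hy2 h => h4 y hy1 hy2 ((hint y).mp h)⟩
  · rintro ⟨h1, h2, h3, h4⟩
    exact ⟨⟨h1, h2⟩, fun a b h => h3 a b ((hreg a b).mpr h),
      fun y hy1 hy2 h => h4 y hy1 hy2 ((hint y).mpr h)⟩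

end Del
section Comp

variable {p : MeshPattern} {x : ℕ}

/-- Column boundary map of `etaDel` is the step map. -/
lemma colExt_etaDel {m : MeshPattern} (hx1 : 1 ≤ x) (hx2 : x ≤ p.len)
    (hlen : m.len + 1 = p.len) :
    ∀ i, i ≤ m.len + 1 → colExt m p (etaDel p x) i = if i < x then i else i + 1 := by
  intro i hi
  simp only [colExt, etaDel]
  split_ifs <;> omega

/-- Value boundary map of a deletion pattern is the step map. -/
lemma valExt_of_delPerm (q : MeshPattern) (hx1 : 1 ≤ x) (hx2 : x ≤ p.len)
    (hqlen : q.len + 1 = p.len) (hqperm : q.perm = delPerm p x) :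
    ∀ j, j ≤ q.len + 1 →
      valExt q p (etaDel p x) j = if j < p.perm x then j else j + 1 := by
  intro j hj
  have hX := p.perm_mem x hx1 hx2
  rcases Nat.eq_zero_or_pos j with h0 | h0
  · subst h0
    simp only [valExt, if_pos rfl]
    split_ifs <;> omega
  rcases Nat.lt_or_ge q.len j with htop | hj2
  · simp only [valExt]
    rw [if_neg (show ¬ j = 0 by omega), if_neg (show ¬ j ≤ q.len by omega)]
    split_ifs <;> omega
  · obtain ⟨e1, e2, e3⟩ := pos_spec_s11 q h0 hj2
    have hd := delPerm_spec p x hx1 hx2 (i := q.pos j) e2 (by omega)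
    have : delPerm p x (q.pos j) = j := by rw [← hqperm]; exact e1
    simp only [valExt]
    rw [if_neg (by omega), if_pos hj2, hd.2.2, this]

/-- Value boundary map of any occurrence along `etaDel` is the step map. -/
lemma valExt_etaDel {m : MeshPattern} (hx1 : 1 ≤ x) (hx2 : x ≤ p.len)
    (hlen : m.len + 1 = p.len) (ho : IsOcc m p (etaDel p x)) :
    ∀ j, j ≤ m.len + 1 →
      valExt m p (etaDel p x) j = if j < p.perm x then j else j + 1 := by
  have hX := p.perm_mem x hx1 hx2
  have hmono := ho.valExt_mono
  have hmem := ho.valExt_mem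
  have hlb := chain_lb hmono (fun j h1 h2 => (hmem j h1 h2).1)
  have hub := chain_ub hmono (fun j h1 h2 => (hmem j h1 h2).2)
  have hne : ∀ j, 1 ≤ j → j ≤ m.len → valExt m p (etaDel p x) j ≠ p.perm x := by
    intro j h1 h2
    obtain ⟨e1, e2, e3⟩ := pos_spec_s11 m h1 h2
    obtain ⟨d0, d1, d2, d3⟩ := etaDel_mem p x hx1 hx2 (i := m.pos j) e2 (by omega)
    simp only [valExt]
    rw [if_neg (by omega), if_pos h2]
    exact fun h => d3 (p.perm_inj _ _ d1 d2 hx1 hx2 h)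
  intro j hj
  rcases Nat.eq_zero_or_pos j with h0 | h0
  · subst h0
    simp only [valExt, if_pos rfl]
    split_ifs <;> omega
  rcases Nat.lt_or_ge m.len j with htop | hj2
  · simp only [valExt]
    rw [if_neg (show ¬ j = 0 by omega), if_neg (show ¬ j ≤ m.len by omega)]
    split_ifs <;> omega
  · have := thresh (f := valExt m p (etaDel p x)) (n := m.len) hX.1 (by omega)
      hlb (fun i h1 h2 => by have := hub i h1 h2; omega) hmono hne j h0 hj2
    exact this

/-- `etaDel p x` is an occurrence of `delPattern p x` in `p`. -/
lemma delPattern_occ (hx1 : 1 ≤ x) (hx2 : x ≤ p.len) :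
    IsOcc (delPattern p x hx1 hx2) p (etaDel p x) := by
  have hql : (delPattern p x hx1 hx2).len = p.len - 1 := rfl
  refine ⟨?_, ?_, ?_, ?_, ?_, ?_⟩
  · intro i h
    rw [hql] at h
    exact etaDel_zero p x (by omega)
  · intro i h1 h2
    rw [hql] at h2
    obtain ⟨d0, d1, d2, d3⟩ := etaDel_mem p x hx1 hx2 h1 h2
    exact ⟨d1, d2⟩
  · intro i j h1 h2 h3
    rw [hql] at h3
    obtain ⟨a0, a1, a2, a3⟩ := etaDel_mem p x hx1 hx2 h1 (by omega)
    obtain ⟨b0, b1, b2, b3⟩ := etaDel_mem p x hx1 hx2 (show 1 ≤ j by omega) h3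
    rw [a0, b0]; split_ifs <;> omega
  · intro i j h1 h2 h3 h4
    rw [hql] at h2 h4
    obtain ⟨a1, a2, a3⟩ := delPerm_spec p x hx1 hx2 h1 h2
    obtain ⟨b1, b2, b3⟩ := delPerm_spec p x hx1 hx2 h3 h4
    show delPerm p x i < delPerm p x j ↔ _
    rw [a3, b3]
    split_ifs <;> omega
  · intro q hq y hy1 hy2
    have h := (delPattern_mem_sh p x hx1 hx2 q.1 q.2).mp (by rwa [Prod.mk.eta])
    exact h.2.2.2 y hy1 hy2
  · intro q hq a b hr
    have h := (delPattern_mem_sh p x hx1 hx2 q.1 q.2).mp (by rwa [Prod.mk.eta])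
    exact h.2.2.1 a b hr

lemma delPattern_isDeletion (hx1 : 1 ≤ x) (hx2 : x ≤ p.len) :
    IsDeletion p x (delPattern p x hx1 hx2) := by
  refine ⟨hx1, hx2, by rw [delPattern_len]; omega, rfl, ?_⟩
  intro i j
  rw [delPattern_mem_sh, delPattern_len]
  constructor
  · rintro ⟨h1, h2, h3, h4⟩; exact ⟨by omega, by omega, h3, h4⟩
  · rintro ⟨h1, h2, h3, h4⟩; exact ⟨by omega, by omega, h3, h4⟩

end Comp

section Reshade

lemma reshade_le (p : MeshPattern) (A : Finset (ℕ × ℕ)) (hA : A ⊆ p.sh) :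
    reshade p A hA ≤ p := by
  set z := reshade p A hA with hz
  have hzl : z.len = p.len := rfl
  have hzp : z.perm = p.perm := rfl
  have hzsh : z.sh = A := rfl
  refine ⟨fun i => if 1 ≤ i ∧ i ≤ p.len then i else 0, ?_, ?_, ?_, ?_, ?_, ?_⟩
  · intro i h; rw [if_neg (by omega)]
  · intro i h1 h2; rw [if_pos ⟨h1, by omega⟩]; omega
  · intro i j h1 h2 h3; rw [if_pos ⟨h1, by omega⟩, if_pos ⟨by omega, by omega⟩]; omega
  · intro i j h1 h2 h3 h4
    rw [if_pos ⟨h1, by omega⟩, if_pos ⟨h3, by omega⟩, hzp]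
  · -- no_point
    intro q hq y hy1 hy2 hint
    have hb := z.sh_mem q hq
    obtain ⟨c1, c2, _, _⟩ := hint
    simp only [colExt] at c1 c2
    split_ifs at c1 c2 <;> omega
  · -- shaded
    intro q hq a b hr
    have hb := z.sh_mem q hq
    obtain ⟨c1, c2, c3, c4⟩ := hr
    have hcol : a = q.1 := by
      simp only [colExt] at c1 c2
      split_ifs at c1 c2 <;> omega
    have hval : b = q.2 := by
      have hv : ∀ t, t ≤ z.len → valExt z p (fun i => if 1 ≤ i ∧ i ≤ p.len then i else 0) t
          = t := by
        intro t ht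
        rcases Nat.eq_zero_or_pos t with h0 | h0
        · subst h0; simp [valExt]
        · obtain ⟨e1, e2, e3⟩ := pos_spec_s11 z h0 ht
          simp only [valExt]
          rw [if_neg (by omega), if_pos ht, if_pos ⟨e2, by omega⟩]
          exact e1
      have hv2 : valExt z p (fun i => if 1 ≤ i ∧ i ≤ p.len then i else 0) (q.2 + 1)
          = q.2 + 1 := by
        rcases Nat.lt_or_ge z.len (q.2 + 1) with h | h
        · have : q.2 = z.len := by omega
          simp only [valExt]
          rw [if_neg (by omega), if_neg (by omega)]
          omega
        · exact hv _ h
      rw [hv q.2 hb.2] at c3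
      rw [hv2] at c4
      omega
    rw [hcol, hval, Prod.mk.eta] at *
    exact hA hq

end Reshade
section Step

lemma step_le {c u v : ℕ} (h : u ≤ v) :
    (if u < c then u else u + 1) ≤ (if v < c then v else v + 1) := by
  split_ifs <;> omega

lemma step_lt {c u v : ℕ} (h : u < v) :
    (if u < c then u else u + 1) < (if v < c then v else v + 1) := by
  split_ifs <;> omega

lemma step_lt_iff {c u v : ℕ} :
    (if u < c then u else u + 1) < (if v < c then v else v + 1) ↔ u < v := by
  split_ifs <;> omega

end Step

section Factor

/-- An occurrence of `m` in `p` avoiding the point `x` factors through `p − x`. -/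
lemma occ_del_factor {m p : MeshPattern} {η : ℕ → ℕ} (ho : IsOcc m p η) {x : ℕ}
    (hx1 : 1 ≤ x) (hx2 : x ≤ p.len)
    (hxη : ∀ i, 1 ≤ i → i ≤ m.len → η i ≠ x) (hlt : m.len < p.len) :
    IsOcc m (delPattern p x hx1 hx2)
      (fun i => if 1 ≤ i ∧ i ≤ m.len then (if η i < x then η i else η i - 1) else 0) := by
  set q := delPattern p x hx1 hx2 with hqdef
  set η₀ : ℕ → ℕ :=
    fun i => if 1 ≤ i ∧ i ≤ m.len then (if η i < x then η i else η i - 1) else 0 with hη₀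
  have hqlen : q.len = p.len - 1 := rfl
  have hqperm : q.perm = delPerm p x := rfl
  have hq1 : q.len + 1 = p.len := by omega
  have hX := p.perm_mem x hx1 hx2
  have hqsh : ∀ a b, ((a, b) ∈ q.sh ↔ a < p.len ∧ b < p.len ∧
      (∀ a' b', inRegion q p (etaDel p x) a b a' b' → (a', b') ∈ p.sh) ∧
      (∀ y, 1 ≤ y → y ≤ p.len → ¬ interiorPt q p (etaDel p x) a b y)) := by
    rw [hqdef]; exact delPattern_mem_sh p x hx1 hx2
  have hqcol : ∀ i, i ≤ q.len + 1 →
      colExt q p (etaDel p x) i = if i < x then i else i + 1 := by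
    rw [hqdef]; exact colExt_etaDel hx1 hx2 (by rw [← hqdef]; omega)
  have hqval : ∀ j, j ≤ q.len + 1 →
      valExt q p (etaDel p x) j = if j < p.perm x then j else j + 1 := by
    rw [hqdef]; exact valExt_of_delPerm _ hx1 hx2 (by rw [← hqdef]; omega) rfl
  have hF0 : ∀ i, 1 ≤ i → i ≤ m.len → 1 ≤ η₀ i ∧ η₀ i ≤ p.len - 1 ∧
      η₀ i = (if η i < x then η i else η i - 1) ∧ etaDel p x (η₀ i) = η i := by
    intro i h1 h2
    have hm := ho.mem i h1 h2
    have hne := hxη i h1 h2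
    have he : η₀ i = (if η i < x then η i else η i - 1) := by
      simp only [hη₀]; rw [if_pos ⟨h1, h2⟩]
    have h3 : 1 ≤ η₀ i := by rw [he]; split_ifs <;> omega
    have h4 : η₀ i ≤ p.len - 1 := by rw [he]; split_ifs <;> omega
    obtain ⟨d0, _, _, _⟩ := etaDel_mem p x hx1 hx2 h3 h4
    refine ⟨h3, h4, he, ?_⟩
    rw [d0, he]; split_ifs <;> omega
  have hcol : ∀ i, i ≤ m.len + 1 → colExt m p η i =
      (if colExt m q η₀ i < x then colExt m q η₀ i else colExt m q η₀ i + 1) ∧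
      colExt m q η₀ i ≤ p.len - 1 + 1 := by
    intro i hi
    rcases Nat.eq_zero_or_pos i with h0 | h0
    · subst h0
      have e1 : colExt m p η 0 = 0 := by simp [colExt]
      have e2 : colExt m q η₀ 0 = 0 := by simp [colExt]
      rw [e1, e2]
      exact ⟨by rw [if_pos (show 0 < x by omega)], by omega⟩
    rcases Nat.lt_or_ge m.len i with htop | hile
    · have e1 : colExt m p η i = p.len + 1 := by
        simp only [colExt]; rw [if_neg (by omega), if_neg (by omega)]
      have e2 : colExt m q η₀ i = q.len + 1 := by
        simp only [colExt]; rw [if_neg (by omega), if_neg (by omega)]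
      rw [e1, e2, hqlen]
      exact ⟨by rw [if_neg (by omega)]; omega, by omega⟩
    · obtain ⟨f1, f2, f3, f4⟩ := hF0 i h0 hile
      have e1 : colExt m p η i = η i := by
        simp only [colExt]; rw [if_neg (by omega), if_pos hile]
      have e2 : colExt m q η₀ i = η₀ i := by
        simp only [colExt]; rw [if_neg (by omega), if_pos hile]
      have hm := ho.mem i h0 hile
      have hne := hxη i h0 hile
      rw [e1, e2, f3]
      exact ⟨by split_ifs <;> omega, by split_ifs <;> omega⟩
  have hval : ∀ j, j ≤ m.len + 1 → valExt m p η j =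
      (if valExt m q η₀ j < p.perm x then valExt m q η₀ j else valExt m q η₀ j + 1) ∧
      valExt m q η₀ j ≤ p.len - 1 + 1 := by
    intro j hj
    rcases Nat.eq_zero_or_pos j with h0 | h0
    · subst h0
      have e1 : valExt m p η 0 = 0 := by simp [valExt]
      have e2 : valExt m q η₀ 0 = 0 := by simp [valExt]
      rw [e1, e2]
      exact ⟨by rw [if_pos (show 0 < p.perm x by omega)], by omega⟩
    rcases Nat.lt_or_ge m.len j with htop | hjle
    · have e1 : valExt m p η j = p.len + 1 := by
        simp only [valExt]; rw [if_neg (by omega), if_neg (by omega)]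
      have e2 : valExt m q η₀ j = q.len + 1 := by
        simp only [valExt]; rw [if_neg (by omega), if_neg (by omega)]
      rw [e1, e2, hqlen]
      exact ⟨by rw [if_neg (by omega)]; omega, by omega⟩
    · obtain ⟨e1, e2, e3⟩ := pos_spec_s11 m h0 hjle
      obtain ⟨f1, f2, f3, f4⟩ := hF0 (m.pos j) e2 e3
      have g1 : valExt m p η j = p.perm (η (m.pos j)) := by
        simp only [valExt]; rw [if_neg (show ¬ j = 0 by omega), if_pos hjle]
      have g2 : valExt m q η₀ j = q.perm (η₀ (m.pos j)) := by
        simp only [valExt]; rw [if_neg (show ¬ j = 0 by omega), if_pos hjle]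
      have hd := delPerm_spec p x hx1 hx2 f1 f2
      rw [f4] at hd
      rw [g1, g2, hqperm]
      exact ⟨hd.2.2, by omega⟩
  refine ⟨?_, ?_, ?_, ?_, ?_, ?_⟩
  · intro i h
    simp only [hη₀]; rw [if_neg (by omega)]
  · intro i h1 h2
    obtain ⟨f1, f2, _, _⟩ := hF0 i h1 h2
    exact ⟨f1, by omega⟩
  · intro i j h1 h2 h3
    have hmi := ho.mem i h1 (by omega)
    have hmj := ho.mem j (by omega) h3
    have hnei := hxη i h1 (by omega)
    have hnej := hxη j (by omega) h3
    have hmono := ho.mono i j h1 h2 h3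
    rw [(hF0 i h1 (by omega)).2.2.1, (hF0 j (by omega) h3).2.2.1]
    split_ifs <;> omega
  · intro i j h1 h2 h3 h4
    obtain ⟨fi1, fi2, fi3, fi4⟩ := hF0 i h1 h2
    obtain ⟨fj1, fj2, fj3, fj4⟩ := hF0 j h3 h4
    have hdi := delPerm_spec p x hx1 hx2 fi1 fi2
    have hdj := delPerm_spec p x hx1 hx2 fj1 fj2
    rw [fi4] at hdi
    rw [fj4] at hdj
    rw [ho.pattern i j h1 h2 h3 h4, hdi.2.2, hdj.2.2, hqperm, step_lt_iff]
  · intro bx hbx y hy1 hy2 hint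
    have hb1 : bx.1 ≤ m.len := (m.sh_mem _ hbx).1
    have hb2 : bx.2 ≤ m.len := (m.sh_mem _ hbx).2
    obtain ⟨c1, c2, c3, c4⟩ := hint
    rw [hqlen] at hy2
    obtain ⟨d0, d1, d2, d3⟩ := etaDel_mem p x hx1 hx2 hy1 hy2
    have hdy := delPerm_spec p x hx1 hx2 hy1 hy2
    rw [hqperm] at c3 c4
    refine ho.no_point bx hbx (etaDel p x y) d1 d2 ⟨?_, ?_, ?_, ?_⟩
    · rw [(hcol bx.1 (by omega)).1, d0]
      exact step_lt c1
    · rw [(hcol (bx.1 + 1) (by omega)).1, d0]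
      exact step_lt c2
    · rw [(hval bx.2 (by omega)).1, hdy.2.2]
      exact step_lt c3
    · rw [(hval (bx.2 + 1) (by omega)).1, hdy.2.2]
      exact step_lt c4
  · intro bx hbx a b hr
    have hb1 : bx.1 ≤ m.len := (m.sh_mem _ hbx).1
    have hb2 : bx.2 ≤ m.len := (m.sh_mem _ hbx).2
    obtain ⟨r1, r2, r3, r4⟩ := hr
    have hp1 : 1 ≤ p.len := by omega
    have ha2 : a ≤ p.len - 1 := by
      have := (hcol (bx.1 + 1) (by omega)).2; omega
    have hbb2 : b ≤ p.len - 1 := by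
      have := (hval (bx.2 + 1) (by omega)).2; omega
    refine (hqsh a b).mpr ⟨by omega, by omega, ?_, ?_⟩
    · intro a' b' h'
      obtain ⟨s1, s2, s3, s4⟩ := h'
      rw [hqcol a (by omega)] at s1
      rw [hqcol (a + 1) (by omega)] at s2
      rw [hqval b (by omega)] at s3
      rw [hqval (b + 1) (by omega)] at s4
      refine ho.shaded bx hbx a' b' ⟨?_, ?_, ?_, ?_⟩
      · rw [(hcol bx.1 (by omega)).1]
        exact le_trans (step_le r1) s1
      · rw [(hcol (bx.1 + 1) (by omega)).1]
        exact lt_of_lt_of_le s2 (step_le r2)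
      · rw [(hval bx.2 (by omega)).1]
        exact le_trans (step_le r3) s3
      · rw [(hval (bx.2 + 1) (by omega)).1]
        exact lt_of_lt_of_le s4 (step_le r4)
    · intro y hy1 hy2 hint
      obtain ⟨c1, c2, c3, c4⟩ := hint
      rw [hqcol a (by omega)] at c1
      rw [hqcol (a + 1) (by omega)] at c2
      rw [hqval b (by omega)] at c3
      rw [hqval (b + 1) (by omega)] at c4
      refine ho.no_point bx hbx y hy1 hy2 ⟨?_, ?_, ?_, ?_⟩
      · rw [(hcol bx.1 (by omega)).1]
        exact lt_of_le_of_lt (step_le r1) c1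
      · rw [(hcol (bx.1 + 1) (by omega)).1]
        exact lt_of_lt_of_le c2 (step_le r2)
      · rw [(hval bx.2 (by omega)).1]
        exact lt_of_le_of_lt (step_le r3) c3
      · rw [(hval (bx.2 + 1) (by omega)).1]
        exact lt_of_lt_of_le c4 (step_le r4)

end Factor
/-- A cover `m ⋖ p` is impure (`dim p - dim m > 1`) iff every occurrence of `m` in `p`
uses all the shaded boxes of `p` and is obtained by deleting a point of `p` whose
deletion merges shadings. -/
theorem impure_edge_iff (m p : MeshPattern) (hcov : CovByM m p) :
    m.dim + 1 < p.dim ↔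
      ∀ η, IsOcc m p η →
        (∀ a b, (a, b) ∈ p.sh → UsesBox m p η a b) ∧
        ∃ x q, IsDeletion p x q ∧ η = etaDel p x ∧ MergesShadings p x q := by
  classical
  have hdim_m : m.dim = m.len + m.sh.card := rfl
  have hdim_p : p.dim = p.len + p.sh.card := rfl
  constructor
  · intro hd η ho
    have hlenle : m.len ≤ p.len := ho.len_le
    have hlt : m.len < p.len := by
      rcases Nat.lt_or_ge m.len p.len with h | h
      · exact h
      exfalso
      have heq : m.len = p.len := by omega
      have hη : ∀ i, 1 ≤ i → i ≤ m.len → η i = i := by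
        intro i h1 h2
        have := ho.eta_lb i h1 h2
        have := ho.eta_ub i h1 h2
        omega
      have hvalm : ∀ j, 1 ≤ j → j ≤ m.len → valExt m p η j = j := by
        intro j h1 h2
        have hlb := chain_lb ho.valExt_mono (fun j h1 h2 => (ho.valExt_mem j h1 h2).1) j h1 h2
        have hub := chain_ub ho.valExt_mono (fun j h1 h2 => (ho.valExt_mem j h1 h2).2) j h1 h2
        omega
      have hregion : ∀ i j, i ≤ m.len → j ≤ m.len → (inRegion m p η i j i j ∧
          ∀ a b, inRegion m p η i j a b → a = i ∧ b = j) := by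
        intro i j hi hj
        have e0 : colExt m p η i = i := by
          rcases Nat.eq_zero_or_pos i with h0 | h0
          · subst h0; simp [colExt]
          · simp only [colExt]
            rw [if_neg (show ¬ i = 0 by omega), if_pos hi]
            exact hη i h0 hi
        have e1 : colExt m p η (i + 1) = i + 1 := by
          rcases Nat.lt_or_ge m.len (i + 1) with h' | h'
          · simp only [colExt]
            rw [if_neg (show ¬ i + 1 = 0 by omega), if_neg (show ¬ i + 1 ≤ m.len by omega)]
            omega
          · simp only [colExt]
            rw [if_neg (show ¬ i + 1 = 0 by omega), if_pos h']
            exact hη (i + 1) (by omega) h'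
        have e2 : valExt m p η j = j := by
          rcases Nat.eq_zero_or_pos j with h0 | h0
          · subst h0; simp [valExt]
          · exact hvalm j h0 hj
        have e3 : valExt m p η (j + 1) = j + 1 := by
          rcases Nat.lt_or_ge m.len (j + 1) with h' | h'
          · simp only [valExt]
            rw [if_neg (show ¬ j + 1 = 0 by omega), if_neg (show ¬ j + 1 ≤ m.len by omega)]
            omega
          · exact hvalm (j + 1) (by omega) h'
        constructor
        · exact ⟨by omega, by omega, by omega, by omega⟩
        · rintro a b ⟨t1, t2, t3, t4⟩
          omega
      have hsub : m.sh ⊆ p.sh := by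
        intro c hc
        have hb1 : c.1 ≤ m.len := (m.sh_mem c hc).1
        have hb2 : c.2 ≤ m.len := (m.sh_mem c hc).2
        have := ho.shaded c hc c.1 c.2 (hregion c.1 c.2 hb1 hb2).1
        rwa [Prod.mk.eta] at this
      have hcard : m.sh.card + 2 ≤ p.sh.card := by omega
      have hnsub : ¬ p.sh ⊆ m.sh := by
        intro hss
        have := Finset.card_le_card hss
        omega
      obtain ⟨e, he, hem⟩ := Finset.not_subset.mp hnsub
      have hA : insert e m.sh ⊆ p.sh := Finset.insert_subset he hsub
      set z := reshade p (insert e m.sh) hA with hzdef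
      have hmz : IsOcc m z η := by
        refine ⟨ho.zero, ?_, ho.mono, ?_, ?_, ?_⟩
        · intro i h1 h2; exact ho.mem i h1 h2
        · intro i j h1 h2 h3 h4; exact ho.pattern i j h1 h2 h3 h4
        · intro c hc y hy1 hy2 hint
          exact ho.no_point c hc y hy1 hy2 hint
        · intro c hc a b hr
          have hb1 : c.1 ≤ m.len := (m.sh_mem c hc).1
          have hb2 : c.2 ≤ m.len := (m.sh_mem c hc).2
          have hab := (hregion c.1 c.2 hb1 hb2).2 a b hr
          have : (a, b) = c := by
            rw [hab.1, hab.2]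
          rw [this]
          show c ∈ insert e m.sh
          exact Finset.mem_insert_of_mem hc
      have hmzlt : m < z := by
        refine ⟨⟨η, hmz⟩, ?_⟩
        intro h
        have h1 : m.sh = z.sh := congrArg MeshPattern.sh h
        have h2 : z.sh = insert e m.sh := rfl
        rw [h2] at h1
        exact hem (h1 ▸ Finset.mem_insert_self e m.sh)
      have hzlt : z < p := by
        refine ⟨reshade_le p _ hA, ?_⟩
        intro h
        have h3 : z.sh = p.sh := congrArg MeshPattern.sh h
        have h2 : z.sh = insert e m.sh := rfl
        rw [h2] at h3
        have hcA : (insert e m.sh).card ≤ m.sh.card + 1 := Finset.card_insert_le e m.sh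
        rw [h3] at hcA
        omega
      exact hcov.2 ⟨z, hmzlt, hzlt⟩
    -- choose a point of p not in the image of η
    obtain ⟨x, hx1, hx2, hxη⟩ :
        ∃ x, 1 ≤ x ∧ x ≤ p.len ∧ ∀ i, 1 ≤ i → i ≤ m.len → η i ≠ x := by
      have hcard : ((Finset.Icc 1 p.len) \ ((Finset.Icc 1 m.len).image η)).Nonempty := by
        rw [← Finset.card_pos]
        have h1 := Finset.card_image_le (s := Finset.Icc 1 m.len) (f := η)
        have h2 := Finset.le_card_sdiff ((Finset.Icc 1 m.len).image η) (Finset.Icc 1 p.len)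
        rw [Nat.card_Icc] at *
        omega
      obtain ⟨x, hx⟩ := hcard
      rw [Finset.mem_sdiff, Finset.mem_Icc] at hx
      refine ⟨x, hx.1.1, hx.1.2, ?_⟩
      intro i h1 h2 hxe
      exact hx.2 (Finset.mem_image.mpr ⟨i, Finset.mem_Icc.mpr ⟨h1, h2⟩, hxe⟩)
    have hqocc := delPattern_occ (p := p) (x := x) hx1 hx2
    have hqdel := delPattern_isDeletion (p := p) (x := x) hx1 hx2
    have hfac := occ_del_factor ho hx1 hx2 hxη hlt
    have hmeq : m = delPattern p x hx1 hx2 := by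
      by_contra hne'
      refine hcov.2 ⟨delPattern p x hx1 hx2, ⟨⟨_, hfac⟩, hne'⟩, ⟨⟨_, hqocc⟩, ?_⟩⟩
      intro h
      have h1 : (delPattern p x hx1 hx2).len = p.len := congrArg MeshPattern.len h
      rw [delPattern_len] at h1
      omega
    have hdelm : IsDeletion p x m := by rw [hmeq]; exact hqdel
    have hlen1 : m.len + 1 = p.len := by
      have h1 := congrArg MeshPattern.len hmeq
      rw [delPattern_len] at h1
      omega
    have hηdel : η = etaDel p x := by
      funext i
      by_cases h : 1 ≤ i ∧ i ≤ m.len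
      · have ht := thresh (f := η) (n := m.len) hx1 (by omega) ho.eta_lb
          (fun i h1 h2 => by have := ho.eta_ub i h1 h2; omega)
          (fun i h1 h2 => ho.mono i (i + 1) h1 (by omega) h2) hxη i h.1 h.2
        rw [ht]
        simp only [etaDel]
        rw [if_pos (show 1 ≤ i ∧ i ≤ p.len - 1 by omega)]
      · rw [ho.zero i (by omega), etaDel_zero p x (by omega)]
    -- every shaded box of p is used
    have hused : ∀ a b, (a, b) ∈ p.sh → UsesBox m p η a b := by
      intro a b hab
      by_contra hnu
      have hno : ¬ ∃ i j, (i, j) ∈ m.sh ∧ inRegion m p η i j a b := by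
        rintro ⟨i, j, h1, h2⟩
        exact hnu ⟨hab, i, j, h1, h2⟩
      have hsub2 : p.sh.erase (a, b) ⊆ p.sh := Finset.erase_subset _ _
      set z := reshade p (p.sh.erase (a, b)) hsub2 with hzdef
      have hmz : IsOcc m z η := by
        refine ⟨ho.zero, ?_, ho.mono, ?_, ?_, ?_⟩
        · intro i h1 h2; exact ho.mem i h1 h2
        · intro i j h1 h2 h3 h4; exact ho.pattern i j h1 h2 h3 h4
        · intro c hc y hy1 hy2 hint
          exact ho.no_point c hc y hy1 hy2 hint
        · intro c hc a' b' hr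
          have h1 : (a', b') ∈ p.sh := ho.shaded c hc a' b' hr
          have h2 : (a', b') ≠ (a, b) := by
            intro hh
            have ha : a' = a := congrArg Prod.fst hh
            have hb : b' = b := congrArg Prod.snd hh
            refine hno ⟨c.1, c.2, by rwa [Prod.mk.eta], ?_⟩
            rw [← ha, ← hb]
            exact hr
          show (a', b') ∈ p.sh.erase (a, b)
          exact Finset.mem_erase.mpr ⟨h2, h1⟩
      refine hcov.2 ⟨z, ⟨⟨η, hmz⟩, ?_⟩, ⟨reshade_le p _ hsub2, ?_⟩⟩
      · intro h
        have h1 : m.len = z.len := congrArg MeshPattern.len h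
        have hzl : z.len = p.len := rfl
        omega
      · intro h
        have h3 : z.sh = p.sh := congrArg MeshPattern.sh h
        have h2 : z.sh = p.sh.erase (a, b) := rfl
        rw [h2] at h3
        have h4 := Finset.card_erase_of_mem hab
        have hpos : 0 < p.sh.card := Finset.card_pos.mpr ⟨_, hab⟩
        rw [h3] at h4
        omega
    have hcard1 : m.sh.card < p.sh.card := by omega
    -- merging
    have hmerge' : ∃ i j, (i, j) ∈ m.sh ∧ ∃ a b a' b', (a, b) ≠ (a', b') ∧ (a, b) ∈ p.sh ∧
        (a', b') ∈ p.sh ∧ inRegion m p η i j a b ∧ inRegion m p η i j a' b' := by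
      by_contra hnm
      have hchoice : ∀ c : ℕ × ℕ, c ∈ p.sh →
          ∃ ij : ℕ × ℕ, ij ∈ m.sh ∧ inRegion m p η ij.1 ij.2 c.1 c.2 := by
        intro c hc
        obtain ⟨_, i, j, h1, h2⟩ := hused c.1 c.2 (by rwa [Prod.mk.eta])
        exact ⟨(i, j), h1, h2⟩
      have hcle : p.sh.card ≤ m.sh.card := by
        refine Finset.card_le_card_of_injOn
          (f := fun c => if h : ∃ ij : ℕ × ℕ, ij ∈ m.sh ∧ inRegion m p η ij.1 ij.2 c.1 c.2
            then h.choose else (0, 0)) ?_ ?_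
        · intro c hc
          simp only [dif_pos (hchoice c hc)]
          exact (hchoice c hc).choose_spec.1
        · intro c hc c' hc' hee
          by_contra hnee
          simp only [dif_pos (hchoice c hc), dif_pos (hchoice c' hc')] at hee
          have s1 := (hchoice c hc).choose_spec
          have s2 := (hchoice c' hc').choose_spec
          rw [← hee] at s2
          apply hnm
          refine ⟨(hchoice c hc).choose.1, (hchoice c hc).choose.2,
            by rw [Prod.mk.eta]; exact s1.1, c.1, c.2, c'.1, c'.2, ?_, ?_, ?_, s1.2, s2.2⟩
          · intro hh
            have ha : c.1 = c'.1 := congrArg Prod.fst hh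
            have hb : c.2 = c'.2 := congrArg Prod.snd hh
            exact hnee (Prod.ext ha hb)
          · rwa [Prod.mk.eta]
          · rwa [Prod.mk.eta]
      omega
    have hmerge : MergesShadings p x m := by
      unfold MergesShadings
      rw [← hηdel]
      exact hmerge'
    exact ⟨hused, x, m, hdelm, hηdel, hmerge⟩
  · intro h
    obtain ⟨η, ho⟩ := hcov.1.1
    obtain ⟨hused, x, q, hdel, hηeq, hmer⟩ := h η ho
    subst hηeq
    obtain ⟨hx1, hx2, hqlen, hqperm, hqsh⟩ := hdel
    have hplen : 1 ≤ p.len := by omega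
    have hmlen : m.len + 1 = p.len := by
      have hge : p.len - 1 ≤ m.len := by
        by_contra hcon
        have h1 := ho.zero (m.len + 1) (by omega)
        obtain ⟨_, h2, _, _⟩ := etaDel_mem p x hx1 hx2 (show 1 ≤ m.len + 1 by omega)
          (show m.len + 1 ≤ p.len - 1 by omega)
        omega
      have hle : m.len ≤ p.len - 1 := by
        by_contra hcon
        have h2 := (ho.mem m.len (by omega) le_rfl).1
        rw [etaDel_zero p x (by omega)] at h2
        omega
      omega
    have hX := p.perm_mem x hx1 hx2
    have hU := colExt_etaDel (m := m) hx1 hx2 hmlen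
    have hV := valExt_etaDel hx1 hx2 hmlen ho
    have hUq := colExt_etaDel (m := q) hx1 hx2 (by omega)
    have hVq := valExt_of_delPerm q hx1 hx2 (by omega) hqperm
    set φ : ℕ × ℕ → ℕ × ℕ := fun ij =>
      (if ij.1 < x then ij.1 else ij.1 + 1, if ij.2 < p.perm x then ij.2 else ij.2 + 1)
      with hφ
    have hφinj : Set.InjOn φ m.sh := by
      intro c hc c' hc' hee
      simp only [hφ, Prod.mk.injEq] at hee
      have e1 := hee.1
      have e2 := hee.2
      have g1 : c.1 = c'.1 := by split_ifs at e1 <;> omega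
      have g2 : c.2 = c'.2 := by split_ifs at e2 <;> omega
      exact Prod.ext g1 g2
    have hφreg : ∀ c : ℕ × ℕ, c ∈ m.sh →
        inRegion m p (etaDel p x) c.1 c.2 (φ c).1 (φ c).2 := by
      intro c hc
      have hb1 : c.1 ≤ m.len := (m.sh_mem c hc).1
      have hb2 : c.2 ≤ m.len := (m.sh_mem c hc).2
      refine ⟨?_, ?_, ?_, ?_⟩
      · rw [hU c.1 (by omega)]
      · rw [hU (c.1 + 1) (by omega)]
        simp only [hφ]
        split_ifs <;> omega
      · rw [hV c.2 (by omega)]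
      · rw [hV (c.2 + 1) (by omega)]
        simp only [hφ]
        split_ifs <;> omega
    have hφsub : m.sh.image φ ⊆ p.sh := by
      intro c hc
      obtain ⟨ij, hij, hijc⟩ := Finset.mem_image.mp hc
      have := ho.shaded ij hij (φ ij).1 (φ ij).2 (hφreg ij hij)
      rw [Prod.mk.eta] at this
      rwa [hijc] at this
    obtain ⟨i0, j0, hi0, a, b, a', b', hnee, habp, habp', hr, hr'⟩ := hmer
    have hq0 : i0 ≤ q.len := (q.sh_mem _ hi0).1
    have hq0' : j0 ≤ q.len := (q.sh_mem _ hi0).2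
    obtain ⟨r1, r2, r3, r4⟩ := hr
    obtain ⟨r1', r2', r3', r4'⟩ := hr'
    rw [hUq i0 (by omega)] at r1 r1'
    rw [hUq (i0 + 1) (by omega)] at r2 r2'
    rw [hVq j0 (by omega)] at r3 r3'
    rw [hVq (j0 + 1) (by omega)] at r4 r4'
    set c0 : ℕ × ℕ := if (a, b) = φ (i0, j0) then (a', b') else (a, b) with hc0
    have hc0p : c0 ∈ p.sh := by rw [hc0]; split_ifs <;> assumption
    have hc0ne : c0 ≠ φ (i0, j0) := by
      rw [hc0]; split_ifs with hh
      · rw [← hh]; exact fun hhh => hnee hhh.symm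
      · exact hh
    have hc0reg : (if i0 < x then i0 else i0 + 1) ≤ c0.1 ∧
        c0.1 < (if i0 + 1 < x then i0 + 1 else i0 + 1 + 1) ∧
        (if j0 < p.perm x then j0 else j0 + 1) ≤ c0.2 ∧
        c0.2 < (if j0 + 1 < p.perm x then j0 + 1 else j0 + 1 + 1) := by
      by_cases hh : (a, b) = φ (i0, j0)
      · rw [hc0, if_pos hh]
        exact ⟨r1', r2', r3', r4'⟩
      · rw [hc0, if_neg hh]
        exact ⟨r1, r2, r3, r4⟩
    have hc0S : c0 ∉ m.sh.image φ := by
      intro hcS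
      obtain ⟨ij, hij, he⟩ := Finset.mem_image.mp hcS
      obtain ⟨t1, t2, t3, t4⟩ := hc0reg
      have e1 : (φ ij).1 = c0.1 := congrArg Prod.fst he
      have e2 : (φ ij).2 = c0.2 := congrArg Prod.snd he
      simp only [hφ] at e1 e2
      have hij1 : ij.1 = i0 := by split_ifs at e1 t1 t2 <;> omega
      have hij2 : ij.2 = j0 := by split_ifs at e2 t3 t4 <;> omega
      apply hc0ne
      rw [← he]
      have : ij = (i0, j0) := Prod.ext hij1 hij2
      rw [this]
    have hcard2 : m.sh.card + 1 ≤ p.sh.card := by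
      have h1 : insert c0 (m.sh.image φ) ⊆ p.sh := Finset.insert_subset hc0p hφsub
      have h2 := Finset.card_le_card h1
      rw [Finset.card_insert_of_notMem hc0S, Finset.card_image_of_injOn hφinj] at h2
      omega
    omega

end MeshPattern
end
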